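/- Let k ∈ ℂ and z₀ ∈ ℂ, and let U be an open neighborhood of z₀. Suppose g, M₁₁, M₂₁ : ℂ → ℂ are real-differentiable on U with g nonvanishing on U, and at z₀ the equations ∂̄M₁₁(z₀) = Q₁₂(z₀)·M₂₁(z₀) and ∂M₂₁(z₀) + i·k·M₂₁(z₀) = Q₂₁(z₀)·M₁₁(z₀) hold. Suppose w : ℂ → ℂ is real-differentiable on U, the functions ∂w and ∂̄w are real-differentiable at z₀ with ∂̄(∂w)(z₀) = ∂(∂̄w)(z₀), and on all of U the equation ∂w(z) + i·k·w(z) = M₁₁(z)/g(z) − 1 holds. Then the function F(z) = ∂̄w(z) − M₂₁(z)/g(z) satisfies ∂F(z₀) + i·k·F(z₀) = 0; that is, (∂ + ik)(∂̄w − γ^{−1/2}M₂₁) = 0 at z₀. -/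

import Mathlib

open Complex

/-- Wirtinger derivative ∂f(z) = (1/2)(Df(z)(1) - i·Df(z)(i)), with Df the real Fréchet derivative. -/
noncomputable def dz (f : ℂ → ℂ) (z : ℂ) : ℂ :=
  (1/2 : ℂ) * (fderiv ℝ f z 1 - Complex.I * fderiv ℝ f z Complex.I)

/-- Wirtinger derivative ∂̄f(z) = (1/2)(Df(z)(1) + i·Df(z)(i)). -/
noncomputable def dzbar (f : ℂ → ℂ) (z : ℂ) : ℂ :=
  (1/2 : ℂ) * (fderiv ℝ f z 1 + Complex.I * fderiv ℝ f z Complex.I)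


lemma fderiv_mul_apply' {f h : ℂ → ℂ} {z v : ℂ} (hf : DifferentiableAt ℝ f z)
    (hh : DifferentiableAt ℝ h z) :
    fderiv ℝ (fun z => f z * h z) z v = fderiv ℝ f z v * h z + f z * fderiv ℝ h z v := by
  rw [fderiv_fun_mul hf hh]; simp [mul_comm]; ring

lemma fderiv_sub_apply' {f h : ℂ → ℂ} {z v : ℂ} (hf : DifferentiableAt ℝ f z)
    (hh : DifferentiableAt ℝ h z) :
    fderiv ℝ (fun z => f z - h z) z v = fderiv ℝ f z v - fderiv ℝ h z v := by
  rw [fderiv_fun_sub hf hh]; simp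

lemma dz_mul' {f h : ℂ → ℂ} {z : ℂ} (hf : DifferentiableAt ℝ f z)
    (hh : DifferentiableAt ℝ h z) :
    dz (fun z => f z * h z) z = dz f z * h z + f z * dz h z := by
  simp only [dz, fderiv_mul_apply' hf hh]; ring

lemma dzbar_mul' {f h : ℂ → ℂ} {z : ℂ} (hf : DifferentiableAt ℝ f z)
    (hh : DifferentiableAt ℝ h z) :
    dzbar (fun z => f z * h z) z = dzbar f z * h z + f z * dzbar h z := by
  simp only [dzbar, fderiv_mul_apply' hf hh]; ring

lemma dz_sub' {f h : ℂ → ℂ} {z : ℂ} (hf : DifferentiableAt ℝ f z)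
    (hh : DifferentiableAt ℝ h z) :
    dz (fun z => f z - h z) z = dz f z - dz h z := by
  simp only [dz, fderiv_sub_apply' hf hh]; ring

lemma dzbar_sub' {f h : ℂ → ℂ} {z : ℂ} (hf : DifferentiableAt ℝ f z)
    (hh : DifferentiableAt ℝ h z) :
    dzbar (fun z => f z - h z) z = dzbar f z - dzbar h z := by
  simp only [dzbar, fderiv_sub_apply' hf hh]; ring

lemma dz_const' (c z : ℂ) : dz (fun _ => c) z = 0 := by
  simp [dz, fderiv_const]

lemma dzbar_const' (c z : ℂ) : dzbar (fun _ => c) z = 0 := by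
  simp [dzbar, fderiv_const]

lemma dz_congr' {f h : ℂ → ℂ} {z : ℂ} (hfh : f =ᶠ[nhds z] h) : dz f z = dz h z := by
  unfold dz; rw [hfh.fderiv_eq]

lemma dzbar_congr' {f h : ℂ → ℂ} {z : ℂ} (hfh : f =ᶠ[nhds z] h) : dzbar f z = dzbar h z := by
  unfold dzbar; rw [hfh.fderiv_eq]

lemma dz_inv' {g : ℂ → ℂ} {z : ℂ} (hg : DifferentiableAt ℝ g z) (h0 : g z ≠ 0)
    (hev : ∀ᶠ x in nhds z, g x ≠ 0) :
    dz (fun z => (g z)⁻¹) z = - dz g z / (g z)^2 := by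
  have hinv : DifferentiableAt ℝ (fun z => (g z)⁻¹) z := hg.inv h0
  have h1 : (fun z => g z * (g z)⁻¹) =ᶠ[nhds z] (fun _ => (1:ℂ)) :=
    hev.mono fun x hx => mul_inv_cancel₀ hx
  have h2 := dz_congr' h1
  rw [dz_mul' hg hinv, dz_const'] at h2
  set X := dz (fun z => (g z)⁻¹) z with hX
  rw [eq_div_iff (pow_ne_zero 2 h0)]
  have h3 : (dz g z * (g z)⁻¹ + g z * X) * g z = 0 := by rw [h2]; ring
  rw [add_mul, mul_assoc, inv_mul_cancel₀ h0] at h3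
  linear_combination h3

lemma dzbar_inv' {g : ℂ → ℂ} {z : ℂ} (hg : DifferentiableAt ℝ g z) (h0 : g z ≠ 0)
    (hev : ∀ᶠ x in nhds z, g x ≠ 0) :
    dzbar (fun z => (g z)⁻¹) z = - dzbar g z / (g z)^2 := by
  have hinv : DifferentiableAt ℝ (fun z => (g z)⁻¹) z := hg.inv h0
  have h1 : (fun z => g z * (g z)⁻¹) =ᶠ[nhds z] (fun _ => (1:ℂ)) :=
    hev.mono fun x hx => mul_inv_cancel₀ hx
  have h2 := dzbar_congr' h1
  rw [dzbar_mul' hg hinv, dzbar_const'] at h2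
  set X := dzbar (fun z => (g z)⁻¹) z with hX
  rw [eq_div_iff (pow_ne_zero 2 h0)]
  have h3 : (dzbar g z * (g z)⁻¹ + g z * X) * g z = 0 := by rw [h2]; ring
  rw [add_mul, mul_assoc, inv_mul_cancel₀ h0] at h3
  linear_combination h3

/-- Matrix potential entry Q₁₂(z) = -∂g(z)/g(z). -/
noncomputable def Q12 (g : ℂ → ℂ) (z : ℂ) : ℂ := - dz g z / g z

/-- Matrix potential entry Q₂₁(z) = -∂̄g(z)/g(z). -/
noncomputable def Q21 (g : ℂ → ℂ) (z : ℂ) : ℂ := - dzbar g z / g z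

/-- The unimodular exponential e(z,k) = exp(i(zk + z̄k̄)). -/
noncomputable def efun (z k : ℂ) : ℂ :=
  Complex.exp (Complex.I * (z * k + (starRingEnd ℂ) z * (starRingEnd ℂ) k))

theorem stmt13 (k z₀ : ℂ) (U : Set ℂ) (hU : IsOpen U) (hz₀ : z₀ ∈ U)
    (g M₁₁ M₂₁ w : ℂ → ℂ)
    (hg : ∀ z ∈ U, DifferentiableAt ℝ g z)
    (hM11 : ∀ z ∈ U, DifferentiableAt ℝ M₁₁ z)
    (hM21 : ∀ z ∈ U, DifferentiableAt ℝ M₂₁ z)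
    (hg0 : ∀ z ∈ U, g z ≠ 0)
    (h1 : dzbar M₁₁ z₀ = Q12 g z₀ * M₂₁ z₀)
    (h2 : dz M₂₁ z₀ + Complex.I * k * M₂₁ z₀ = Q21 g z₀ * M₁₁ z₀)
    (hw : ∀ z ∈ U, DifferentiableAt ℝ w z)
    (hdw : DifferentiableAt ℝ (dz w) z₀)
    (hdbarw : DifferentiableAt ℝ (dzbar w) z₀)
    (hmixed : dzbar (dz w) z₀ = dz (dzbar w) z₀)
    (heq : ∀ z ∈ U, dz w z + Complex.I * k * w z = M₁₁ z / g z - 1) :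
    dz (fun z => dzbar w z - M₂₁ z / g z) z₀ +
      Complex.I * k * (dzbar w z₀ - M₂₁ z₀ / g z₀) = 0 := by
  have hUev : ∀ᶠ x in nhds z₀, x ∈ U := hU.mem_nhds hz₀
  have hgz := hg z₀ hz₀
  have hg0z := hg0 z₀ hz₀
  have hinvd : DifferentiableAt ℝ (fun z => (g z)⁻¹) z₀ := hgz.inv hg0z
  have hgev : ∀ᶠ x in nhds z₀, g x ≠ 0 := hUev.mono fun x hx => hg0 x hx
  have hdzinv := dz_inv' hgz hg0z hgev
  have hdzbarinv := dzbar_inv' hgz hg0z hgev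
  have hF : (fun z => dzbar w z - M₂₁ z / g z) = (fun z => dzbar w z - M₂₁ z * (g z)⁻¹) := by
    funext z; rw [div_eq_mul_inv]
  have hM21g : DifferentiableAt ℝ (fun z => M₂₁ z * (g z)⁻¹) z₀ := (hM21 z₀ hz₀).mul hinvd
  have hM11g : DifferentiableAt ℝ (fun z => M₁₁ z * (g z)⁻¹) z₀ := (hM11 z₀ hz₀).mul hinvd
  have hsub1 : DifferentiableAt ℝ (fun z => M₁₁ z * (g z)⁻¹ - 1) z₀ := hM11g.sub_const 1
  have hkw : DifferentiableAt ℝ (fun z => Complex.I * k * w z) z₀ := (hw z₀ hz₀).const_mul _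
  have hev1 : dz w =ᶠ[nhds z₀] (fun z => (M₁₁ z * (g z)⁻¹ - 1) - Complex.I * k * w z) :=
    hUev.mono fun x hx => by
      have h := heq x hx
      rw [div_eq_mul_inv] at h
      linear_combination h
  have key : dz (dzbar w) z₀
      = (dzbar M₁₁ z₀ * (g z₀)⁻¹ + M₁₁ z₀ * (- dzbar g z₀ / (g z₀)^2))
        - Complex.I * k * dzbar w z₀ := by
    rw [← hmixed, dzbar_congr' hev1, dzbar_sub' hsub1 hkw]
    have e1 : dzbar (fun z => M₁₁ z * (g z)⁻¹ - 1) z₀ = dzbar (fun z => M₁₁ z * (g z)⁻¹) z₀ := by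
      have := dzbar_sub' (z := z₀) hM11g (differentiableAt_const (1:ℂ))
      rw [this, dzbar_const', sub_zero]
    have e2 : dzbar (fun z => Complex.I * k * w z) z₀ = Complex.I * k * dzbar w z₀ := by
      have := dzbar_mul' (f := fun _ => Complex.I * k) (z := z₀)
        (differentiableAt_const _) (hw z₀ hz₀)
      rw [this, dzbar_const']; ring
    rw [e1, e2, dzbar_mul' (hM11 z₀ hz₀) hinvd, hdzbarinv]
  rw [hF, dz_sub' hdbarw hM21g, dz_mul' (hM21 z₀ hz₀) hinvd, hdzinv, key]
  have h1' : dzbar M₁₁ z₀ * g z₀ = - dz g z₀ * M₂₁ z₀ := by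
    rw [h1, Q12]; field_simp
  have h2' : (dz M₂₁ z₀ + Complex.I * k * M₂₁ z₀) * g z₀ = - dzbar g z₀ * M₁₁ z₀ := by
    rw [h2, Q21]; field_simp
  field_simp
  linear_combination h1' - h2'
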